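/- Let 𝓜 be a regular collection of channel sets that is DF-reducible. Suppose M₁ and M₂ are two distinct member occurrences in 𝓜 with ch ∈ M₁ and d ch ∈ M₂ for some channel ch. Then the collection 𝓜' obtained from 𝓜 by removing M₁ and M₂ and adding the two sets M₁ \ {ch} and M₂ \ {d ch} is also DF-reducible. -/

import Mathlib

/-- `𝓜` DF-reduces to `𝓜'` via channel `ch`: there are two distinct member
occurrences `M₁`, `M₂` in `𝓜` with `ch ∈ M₁` and `d ch ∈ M₂`, and `𝓜'` is
obtained from `𝓜` by removing `M₁` and `M₂` and adding `(M₁ ∪ M₂) \ {ch, d ch}`. -/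
def DFStepVia {α : Type*} [DecidableEq α] (d : α → α)
    (𝓜 𝓜' : Multiset (Finset α)) (ch : α) : Prop :=
  ∃ M₁ M₂ : Finset α, M₁ ∈ 𝓜 ∧ M₂ ∈ 𝓜.erase M₁ ∧ ch ∈ M₁ ∧ d ch ∈ M₂ ∧
    𝓜' = ((M₁ ∪ M₂) \ {ch, d ch}) ::ₘ ((𝓜.erase M₁).erase M₂)

theorem DFStepVia.card_lt {α : Type*} [DecidableEq α] {d : α → α}
    {𝓜 𝓜' : Multiset (Finset α)} {ch : α}
    (h : DFStepVia d 𝓜 𝓜' ch) : Multiset.card 𝓜' < Multiset.card 𝓜 := by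
  obtain ⟨M₁, M₂, h₁, h₂, -, -, rfl⟩ := h
  have c₁ : Multiset.card (𝓜.erase M₁) < Multiset.card 𝓜 :=
    Multiset.card_erase_lt_of_mem h₁
  have c₂ : Multiset.card ((𝓜.erase M₁).erase M₂) < Multiset.card (𝓜.erase M₁) :=
    Multiset.card_erase_lt_of_mem h₂
  rw [Multiset.card_cons]
  omega

/-- A collection `𝓜` of channel sets is regular if its member sets are pairwise
disjoint and, for every channel `ch`, `ch` belongs to the union of the sets in
`𝓜` iff `d ch` does. -/
def Regular {α : Type*} [DecidableEq α] (d : α → α)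
    (𝓜 : Multiset (Finset α)) : Prop :=
  Multiset.Pairwise (fun M₁ M₂ => Disjoint M₁ M₂) 𝓜 ∧
    ∀ ch : α, ch ∈ 𝓜.sup ↔ d ch ∈ 𝓜.sup

/-- `𝓜` is DF-normal if it DF-reduces to no collection. -/
def DFNormal {α : Type*} [DecidableEq α] (d : α → α)
    (𝓜 : Multiset (Finset α)) : Prop :=
  ¬ ∃ 𝓜' ch, DFStepVia d 𝓜 𝓜' ch

/-- `𝓜` is DF-reducible if either every member set of `𝓜` is empty, or `𝓜` is
not DF-normal and every `𝓜'` to which `𝓜` DF-reduces is DF-reducible. -/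
def DFReducible {α : Type*} [DecidableEq α] (d : α → α)
    (𝓜 : Multiset (Finset α)) : Prop :=
  (∀ M ∈ 𝓜, M = ∅) ∨
    ((∃ 𝓜' ch, DFStepVia d 𝓜 𝓜' ch) ∧
      ∀ 𝓜' ch (h : DFStepVia d 𝓜 𝓜' ch), DFReducible d 𝓜')
termination_by Multiset.card 𝓜
decreasing_by exact h.card_lt

namespace DFAux

variable {α : Type*} [DecidableEq α] {d : α → α}

def Pdisj (s : Multiset (Finset α)) : Prop :=
  ∀ a : α, Multiset.card (s.filter (fun M => a ∈ M)) ≤ 1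

lemma mem_msup {s : Multiset (Finset α)} {a : α} :
    a ∈ s.sup ↔ ∃ M ∈ s, a ∈ M := by
  induction s using Multiset.induction with
  | empty => simp
  | cons X s ih => simp [Multiset.sup_cons, ih]

lemma pdisj_pair {s : Multiset (Finset α)} (h : Pdisj s) {X Y : Finset α} {a : α}
    (hX : X ∈ s) (hY : Y ∈ s.erase X) (haX : a ∈ X) (haY : a ∈ Y) : False := by
  have h' := h a
  rw [show s = X ::ₘ Y ::ₘ ((s.erase X).erase Y) by
        rw [Multiset.cons_erase hY, Multiset.cons_erase hX]] at h'
  simp [Multiset.filter_cons, haX, haY] at h'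

/-- the modified regularity predicate -/
def Reg2 (d : α → α) (s : Multiset (Finset α)) : Prop :=
  Pdisj s ∧ ∀ a : α, a ∈ s.sup ↔ d a ∈ s.sup

lemma closure_sdiff (hinv : Function.Involutive d) {S : Finset α} {ch : α}
    (hS : ∀ a, a ∈ S ↔ d a ∈ S) (a : α) :
    a ∈ S \ {ch, d ch} ↔ d a ∈ S \ {ch, d ch} := by
  simp only [Finset.mem_sdiff, Finset.mem_insert, Finset.mem_singleton]
  have h1 : a = ch ↔ d a = d ch := ⟨fun h => by rw [h], fun h => hinv.injective h⟩
  have h2 : a = d ch ↔ d a = ch := ⟨fun h => by rw [h, hinv], fun h => by rw [← hinv a, h]⟩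
  rw [hS a]
  tauto

lemma sup_split {M₁ M₂ : Finset α} {R : Multiset (Finset α)} {ch dch : α}
    (h12 : dch ∉ M₁) (h21 : ch ∉ M₂)
    (hcR : ch ∉ R.sup) (hdR : dch ∉ R.sup) :
    ((M₁ \ {ch}) ::ₘ (M₂ \ {dch}) ::ₘ R).sup = (M₁ ::ₘ M₂ ::ₘ R).sup \ {ch, dch} := by
  ext a
  simp only [Multiset.sup_cons, Finset.sup_eq_union, Finset.mem_union, Finset.mem_sdiff,
    Finset.mem_insert, Finset.mem_singleton]
  have f1 : a ∈ M₁ → a ≠ dch := fun h e => h12 (e ▸ h)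
  have f2 : a ∈ M₂ → a ≠ ch := fun h e => h21 (e ▸ h)
  have f3 : a ∈ R.sup → a ≠ ch := fun h e => hcR (e ▸ h)
  have f4 : a ∈ R.sup → a ≠ dch := fun h e => hdR (e ▸ h)
  tauto

lemma sup_merge {M₁ M₂ : Finset α} {R : Multiset (Finset α)} {ch dch : α}
    (h12 : dch ∉ M₁) (h21 : ch ∉ M₂)
    (hcR : ch ∉ R.sup) (hdR : dch ∉ R.sup) :
    (((M₁ ∪ M₂) \ {ch, dch}) ::ₘ R).sup = (M₁ ::ₘ M₂ ::ₘ R).sup \ {ch, dch} := by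
  ext a
  simp only [Multiset.sup_cons, Finset.sup_eq_union, Finset.mem_union, Finset.mem_sdiff,
    Finset.mem_insert, Finset.mem_singleton]
  have f1 : a ∈ M₁ → a ≠ dch := fun h e => h12 (e ▸ h)
  have f2 : a ∈ M₂ → a ≠ ch := fun h e => h21 (e ▸ h)
  have f3 : a ∈ R.sup → a ≠ ch := fun h e => hcR (e ▸ h)
  have f4 : a ∈ R.sup → a ≠ dch := fun h e => hdR (e ▸ h)
  tauto

lemma pdisj_step {M₁ M₂ C : Finset α} {R : Multiset (Finset α)} (hC : C ⊆ M₁ ∪ M₂)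
    (h : Pdisj (M₁ ::ₘ M₂ ::ₘ R)) : Pdisj (C ::ₘ R) := by
  intro a
  have ha := h a
  simp only [Multiset.filter_cons, Multiset.card_add] at ha ⊢
  by_cases hc : a ∈ C
  · have h' := hC hc
    rw [Finset.mem_union] at h'
    rw [if_pos hc, Multiset.card_singleton]
    rcases h' with h' | h'
    · rw [if_pos h', Multiset.card_singleton] at ha
      split_ifs at ha <;> simp_all <;> omega
    · rw [if_pos h', Multiset.card_singleton] at ha
      split_ifs at ha <;> simp_all <;> omega
  · rw [if_neg hc, Multiset.card_zero]
    split_ifs at ha <;> simp_all <;> omega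

lemma reg2_step (hinv : Function.Involutive d) {𝓜 𝓜' : Multiset (Finset α)} {ch : α}
    (hreg : Reg2 d 𝓜) (h : DFStepVia d 𝓜 𝓜' ch) : Reg2 d 𝓜' := by
  obtain ⟨M₁, M₂, h₁, h₂, hch, hdch, rfl⟩ := h
  have hpd := hreg.1
  have hsup := hreg.2
  have hd1 : d ch ∉ M₁ := fun hx => pdisj_pair hpd h₁ h₂ hx hdch
  have hd2 : ch ∉ M₂ := fun hx => pdisj_pair hpd h₁ h₂ hch hx
  obtain ⟨R, hR⟩ : ∃ R, 𝓜 = M₁ ::ₘ M₂ ::ₘ R :=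
    ⟨(𝓜.erase M₁).erase M₂, by rw [Multiset.cons_erase h₂, Multiset.cons_erase h₁]⟩
  have hRe : (𝓜.erase M₁).erase M₂ = R := by
    rw [hR, Multiset.erase_cons_head, Multiset.erase_cons_head]
  have hcR : ch ∉ R.sup := by
    rw [mem_msup]
    rintro ⟨Y, hY, hchY⟩
    exact pdisj_pair hpd h₁ (Multiset.erase_subset _ _ (hRe ▸ hY : Y ∈ (𝓜.erase M₁).erase M₂)) hch hchY
  have hdR : d ch ∉ R.sup := by
    rw [mem_msup]
    rintro ⟨Y, hY, hchY⟩
    refine pdisj_pair hpd (Multiset.mem_of_mem_erase h₂) ?_ hdch hchY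
    rw [← Multiset.erase_comm] at hRe
    exact Multiset.erase_subset _ _ (hRe ▸ hY : Y ∈ (𝓜.erase M₂).erase M₁)
  constructor
  · rw [hRe]
    exact pdisj_step Finset.sdiff_subset (hR ▸ hpd)
  · intro a
    rw [hRe, sup_merge hd1 hd2 hcR hdR, ← hR]
    exact closure_sdiff hinv hsup a

lemma step_sum {𝓜 𝓜' : Multiset (Finset α)} {ch : α} (hpd : Pdisj 𝓜)
    (h : DFStepVia d 𝓜 𝓜' ch) :
    (𝓜'.map Finset.card).sum + 2 = (𝓜.map Finset.card).sum := by
  obtain ⟨M₁, M₂, h₁, h₂, hch, hdch, rfl⟩ := h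
  have hd1 : d ch ∉ M₁ := fun hx => pdisj_pair hpd h₁ h₂ hx hdch
  have hne : ch ≠ d ch := fun e => hd1 (e ▸ hch)
  have hsub : ({ch, d ch} : Finset α) ⊆ M₁ ∪ M₂ := by
    intro x hx
    simp only [Finset.mem_insert, Finset.mem_singleton] at hx
    rcases hx with rfl | rfl <;> simp [hch, hdch]
  have hcardp : ({ch, d ch} : Finset α).card = 2 := by
    rw [Finset.card_insert_of_notMem (by simpa using hne), Finset.card_singleton]
  have hcd : ((M₁ ∪ M₂) \ {ch, d ch}).card = (M₁ ∪ M₂).card - 2 := by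
    rw [Finset.card_sdiff_of_subset hsub, hcardp]
  have hcu : (M₁ ∪ M₂).card = M₁.card + M₂.card := by
    rw [Finset.card_union_of_disjoint]
    rw [Finset.disjoint_left]
    intro a hx hy
    exact (pdisj_pair hpd h₁ h₂ hx hy).elim
  have h2' : 2 ≤ (M₁ ∪ M₂).card := hcardp ▸ Finset.card_le_card hsub
  have hc1 : 1 ≤ M₁.card := Finset.card_pos.mpr ⟨ch, hch⟩
  obtain ⟨R, hR⟩ : ∃ R, 𝓜 = M₁ ::ₘ M₂ ::ₘ R :=
    ⟨(𝓜.erase M₁).erase M₂, by rw [Multiset.cons_erase h₂, Multiset.cons_erase h₁]⟩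
  have hRe : (𝓜.erase M₁).erase M₂ = R := by
    rw [hR, Multiset.erase_cons_head, Multiset.erase_cons_head]
  rw [hRe, hR]
  simp only [Multiset.map_cons, Multiset.sum_cons]
  omega

lemma not_red_of_loop (hinv : Function.Involutive d) :
    ∀ (n : ℕ) (𝓜 : Multiset (Finset α)), Multiset.card 𝓜 ≤ n →
    Reg2 d 𝓜 → ∀ (M : Finset α) (a : α), M ∈ 𝓜 → a ∈ M → d a ∈ M →
    ¬ DFReducible d 𝓜 := by
  intro n
  induction n with
  | zero =>
    intro 𝓜 hcard _ M a hM _ _ _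
    rw [Nat.le_zero, Multiset.card_eq_zero] at hcard
    subst hcard
    exact absurd hM (Multiset.notMem_zero M)
  | succ n ih =>
    intro 𝓜 hcard hreg M a hM haM hdaM hred
    rw [DFReducible] at hred
    rcases hred with hemp | ⟨⟨𝓜', ch', hstep⟩, hall⟩
    · exact absurd (hemp M hM) (Finset.ne_empty_of_mem haM)
    obtain ⟨M₁, M₂, h₁, h₂, hch, hdch, rfl⟩ := hstep
    have hstep' : DFStepVia d 𝓜 (((M₁ ∪ M₂) \ {ch', d ch'}) ::ₘ (𝓜.erase M₁).erase M₂) ch' :=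
      ⟨M₁, M₂, h₁, h₂, hch, hdch, rfl⟩
    have hpd := hreg.1
    have hd1 : d ch' ∉ M₁ := fun hx => pdisj_pair hpd h₁ h₂ hx hdch
    have hd2 : ch' ∉ M₂ := fun hx => pdisj_pair hpd h₁ h₂ hch hx
    have hreg' := reg2_step hinv hreg hstep'
    have hred' := hall _ ch' hstep'
    obtain ⟨R, hR⟩ : ∃ R, 𝓜 = M₁ ::ₘ M₂ ::ₘ R :=
      ⟨(𝓜.erase M₁).erase M₂, by rw [Multiset.cons_erase h₂, Multiset.cons_erase h₁]⟩
    have hRe : (𝓜.erase M₁).erase M₂ = R := by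
      rw [hR, Multiset.erase_cons_head, Multiset.erase_cons_head]
    rw [hRe] at hreg' hred'
    have hcard' : Multiset.card ((((M₁ ∪ M₂) \ {ch', d ch'})) ::ₘ R) ≤ n := by
      have := hcard
      rw [hR] at this
      simp only [Multiset.card_cons] at this ⊢
      omega
    have hM' : M = M₁ ∨ M = M₂ ∨ M ∈ R := by
      rw [hR] at hM
      simpa using hM
    rcases hM' with rfl | rfl | hMR
    · -- loop inside M₁
      have q1 : a ≠ d ch' := fun e => hd1 (e ▸ haM)
      have q2 : d a ≠ d ch' := fun e => hd1 (e ▸ hdaM)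
      have q3 : a ≠ ch' := fun e => q2 (by rw [e])
      have q4 : d a ≠ ch' := fun e => q1 (by rw [← hinv a, e])
      refine ih _ hcard' hreg' ((M ∪ M₂) \ {ch', d ch'}) a (Multiset.mem_cons_self _ _) ?_ ?_ hred'
      · simp [Finset.mem_sdiff, haM, q3, q1]
      · simp [Finset.mem_sdiff, hdaM, q4, q2]
    · -- loop inside M₂
      have q1 : a ≠ ch' := fun e => hd2 (e ▸ haM)
      have q2 : d a ≠ ch' := fun e => hd2 (e ▸ hdaM)
      have q3 : a ≠ d ch' := fun e => q2 (by rw [e]; exact hinv ch')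
      have q4 : d a ≠ d ch' := fun e => q1 (hinv.injective e)
      refine ih _ hcard' hreg' ((M₁ ∪ M) \ {ch', d ch'}) a (Multiset.mem_cons_self _ _) ?_ ?_ hred'
      · simp [Finset.mem_sdiff, haM, q1, q3]
      · simp [Finset.mem_sdiff, hdaM, q2, q4]
    · exact ih _ hcard' hreg' M a (Multiset.mem_cons_of_mem hMR) haM hdaM hred'

lemma erase2 (a b : Finset α) (s : Multiset (Finset α)) :
    (a ::ₘ b ::ₘ s).erase b = a ::ₘ s := by
  rw [Multiset.cons_swap, Multiset.erase_cons_head]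

lemma erase3 (a b c : Finset α) (s : Multiset (Finset α)) :
    (a ::ₘ b ::ₘ c ::ₘ s).erase c = a ::ₘ b ::ₘ s := by
  rw [Multiset.cons_swap b c, Multiset.cons_swap a c, Multiset.erase_cons_head]

set_option maxHeartbeats 2000000 in
lemma main_aux (hinv : Function.Involutive d) :
    ∀ (n : ℕ) (𝓜 : Multiset (Finset α)), (𝓜.map Finset.card).sum ≤ n →
    Reg2 d 𝓜 → DFReducible d 𝓜 →
    ∀ (M₁ M₂ : Finset α) (ch : α), M₁ ∈ 𝓜 → M₂ ∈ 𝓜.erase M₁ → ch ∈ M₁ → d ch ∈ M₂ →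
    DFReducible d ((M₁ \ {ch}) ::ₘ (M₂ \ {d ch}) ::ₘ ((𝓜.erase M₁).erase M₂)) := by
  intro n
  induction n with
  | zero =>
    intro 𝓜 hsum _ _ M₁ M₂ ch hM₁ _ hch _
    exfalso
    have h1 : 1 ≤ M₁.card := Finset.card_pos.mpr ⟨ch, hch⟩
    have h2 : M₁.card ∈ 𝓜.map Finset.card := Multiset.mem_map_of_mem _ hM₁
    have h3 := Multiset.single_le_sum (fun x _ => Nat.zero_le x) _ h2
    omega
  | succ n ih =>
    intro 𝓜 hsum hreg hred M₁ M₂ ch hM₁ hM₂ hch hdch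
    have hred0 := hred
    rw [DFReducible] at hred
    have hallM : ∀ 𝓜' ch', DFStepVia d 𝓜 𝓜' ch' → DFReducible d 𝓜' := by
      rcases hred with hemp | ⟨_, hall⟩
      · exact absurd (hemp M₁ hM₁) (Finset.ne_empty_of_mem hch)
      · exact hall
    have hpd := hreg.1
    have hd1 : d ch ∉ M₁ := fun hx => pdisj_pair hpd hM₁ hM₂ hx hdch
    have hd2 : ch ∉ M₂ := fun hx => pdisj_pair hpd hM₁ hM₂ hch hx
    obtain ⟨R, hR⟩ : ∃ R, 𝓜 = M₁ ::ₘ M₂ ::ₘ R :=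
      ⟨_, by rw [Multiset.cons_erase hM₂, Multiset.cons_erase hM₁]⟩
    have hRe : (𝓜.erase M₁).erase M₂ = R := by
      rw [hR, Multiset.erase_cons_head, Multiset.erase_cons_head]
    have hM₂' : M₂ ∈ 𝓜 := Multiset.mem_of_mem_erase hM₂
    have h1R : ∀ Y ∈ R, ∀ x ∈ M₁, x ∉ Y := fun Y hY x hx1 hxY =>
      pdisj_pair hpd hM₁
        (by rw [hR, Multiset.erase_cons_head]; exact Multiset.mem_cons_of_mem hY) hx1 hxY
    have h2R : ∀ Y ∈ R, ∀ x ∈ M₂, x ∉ Y := fun Y hY x hx1 hxY =>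
      pdisj_pair hpd hM₂'
        (by rw [hR, erase2]; exact Multiset.mem_cons_of_mem hY) hx1 hxY
    have hchR : ∀ Y ∈ R, ch ∉ Y := fun Y hY => h1R Y hY ch hch
    have hdchR : ∀ Y ∈ R, d ch ∉ Y := fun Y hY => h2R Y hY (d ch) hdch
    rw [hRe, DFReducible]
    by_cases hemp : ∀ X ∈ (M₁ \ {ch}) ::ₘ (M₂ \ {d ch}) ::ₘ R, X = ∅
    · exact Or.inl hemp
    right
    push_neg at hemp
    obtain ⟨X, hX, hXne⟩ := hemp
    constructor
    · -- existence of a step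
      obtain ⟨a, haX⟩ := hXne
      have hnoloop : d a ∉ X := by
        intro hdaX
        rcases Multiset.mem_cons.mp hX with e | hX'
        · have g1 : a ∈ M₁ := (Finset.mem_sdiff.mp (e ▸ haX)).1
          have g2 : d a ∈ M₁ := (Finset.mem_sdiff.mp (e ▸ hdaX)).1
          exact not_red_of_loop hinv _ 𝓜 le_rfl hreg M₁ a hM₁ g1 g2 hred0
        rcases Multiset.mem_cons.mp hX' with e | hX''
        · have g1 : a ∈ M₂ := (Finset.mem_sdiff.mp (e ▸ haX)).1
          have g2 : d a ∈ M₂ := (Finset.mem_sdiff.mp (e ▸ hdaX)).1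
          exact not_red_of_loop hinv _ 𝓜 le_rfl hreg M₂ a hM₂' g1 g2 hred0
        · have hXM : X ∈ 𝓜 := by
            rw [hR]
            exact Multiset.mem_cons_of_mem (Multiset.mem_cons_of_mem hX'')
          exact not_red_of_loop hinv _ 𝓜 le_rfl hreg X a hXM haX hdaX hred0
      have hcsup : ch ∉ R.sup := by
        rw [mem_msup]; rintro ⟨Y, hY, hxY⟩; exact hchR Y hY hxY
      have hdsup : d ch ∉ R.sup := by
        rw [mem_msup]; rintro ⟨Y, hY, hxY⟩; exact hdchR Y hY hxY
      have hsupN : ((M₁ \ {ch}) ::ₘ (M₂ \ {d ch}) ::ₘ R).sup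
          = (M₁ ::ₘ M₂ ::ₘ R).sup \ {ch, d ch} := sup_split hd1 hd2 hcsup hdsup
      have hcl : ∀ b, b ∈ (M₁ ::ₘ M₂ ::ₘ R).sup ↔ d b ∈ (M₁ ::ₘ M₂ ::ₘ R).sup := by
        rw [← hR]; exact hreg.2
      have haN : a ∈ ((M₁ \ {ch}) ::ₘ (M₂ \ {d ch}) ::ₘ R).sup :=
        mem_msup.mpr ⟨X, hX, haX⟩
      have hdaN : d a ∈ ((M₁ \ {ch}) ::ₘ (M₂ \ {d ch}) ::ₘ R).sup := by
        rw [hsupN] at haN ⊢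
        exact (closure_sdiff hinv hcl a).mp haN
      obtain ⟨Y, hY, hdaY⟩ := mem_msup.mp hdaN
      have hYX : Y ≠ X := fun e => hnoloop (e ▸ hdaY)
      exact ⟨_, a, X, Y, hX, (Multiset.mem_erase_of_ne hYX).mpr hY, haX, hdaY, rfl⟩
    · -- all steps lead to reducible collections
      rintro 𝓝' ch' ⟨A, B, hA, hB, hch', hdch', rfl⟩
      rcases Multiset.mem_cons.mp hA with rfl | hA1
      · -- A = M₁ \ {ch}
        rw [Multiset.erase_cons_head] at hB
        obtain ⟨hc1, hc2⟩ := Finset.mem_sdiff.mp hch'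
        rw [Finset.mem_singleton] at hc2
        rcases Multiset.mem_cons.mp hB with rfl | hB1
        · -- B = M₂ \ {d ch} : impossible (would create a loop on ch in 𝓜's reduct)
          exfalso
          obtain ⟨hc3, hc4⟩ := Finset.mem_sdiff.mp hdch'
          rw [Finset.mem_singleton] at hc4
          have hstep2 : DFStepVia d 𝓜 (((M₁ ∪ M₂) \ {ch', d ch'}) ::ₘ R) ch' :=
            ⟨M₁, M₂, hM₁, hM₂, hc1, hc3, by rw [hRe]⟩
          have hred2 := hallM _ _ hstep2
          have hreg2 := reg2_step hinv hreg hstep2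
          have e1 : ch ≠ ch' := Ne.symm hc2
          have e2 : ch ≠ d ch' := fun e => hd2 (by rw [e]; exact hc3)
          have f1 : d ch ≠ ch' := fun e => hd1 (by rw [e]; exact hc1)
          have f2 : d ch ≠ d ch' := fun e => e1 (hinv.injective e)
          refine not_red_of_loop hinv (Multiset.card _) _ le_rfl hreg2
            ((M₁ ∪ M₂) \ {ch', d ch'}) ch (Multiset.mem_cons_self _ _) ?_ ?_ hred2
          · exact Finset.mem_sdiff.mpr ⟨Finset.mem_union_left _ hch, by simp [e1, e2]⟩
          · exact Finset.mem_sdiff.mpr ⟨Finset.mem_union_right _ hdch, by simp [f1, f2]⟩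
        · -- B ∈ R
          obtain ⟨T, hT⟩ : ∃ T, R = B ::ₘ T := ⟨_, (Multiset.cons_erase hB1).symm⟩
          have hBM : B ∈ 𝓜.erase M₁ := by
            rw [hR, Multiset.erase_cons_head]; exact Multiset.mem_cons_of_mem hB1
          have hstep2 : DFStepVia d 𝓜 (((M₁ ∪ B) \ {ch', d ch'}) ::ₘ (𝓜.erase M₁).erase B) ch' :=
            ⟨M₁, B, hM₁, hBM, hc1, hdch', rfl⟩
          have heB : (𝓜.erase M₁).erase B = M₂ ::ₘ T := by
            rw [hR, Multiset.erase_cons_head, hT, erase2]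
          have hred2 := hallM _ _ hstep2
          have hreg2 := reg2_step hinv hreg hstep2
          have hsum2 := step_sum hpd hstep2
          rw [heB] at hred2 hreg2 hsum2
          have g1 : ch ≠ ch' := Ne.symm hc2
          have g2 : ch ≠ d ch' := fun e => hchR B hB1 (by rw [e]; exact hdch')
          have hchN : ch ∈ (M₁ ∪ B) \ {ch', d ch'} :=
            Finset.mem_sdiff.mpr ⟨Finset.mem_union_left _ hch, by simp [g1, g2]⟩
          have key := ih _ (by omega) hreg2 hred2 ((M₁ ∪ B) \ {ch', d ch'}) M₂ ch
            (Multiset.mem_cons_self _ _)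
            (by rw [Multiset.erase_cons_head]; exact Multiset.mem_cons_self _ _)
            hchN hdch
          rw [Multiset.erase_cons_head, Multiset.erase_cons_head] at key
          have hhead : ((M₁ \ {ch}) ∪ B) \ {ch', d ch'} = ((M₁ ∪ B) \ {ch', d ch'}) \ {ch} := by
            ext x
            simp only [Finset.mem_sdiff, Finset.mem_union, Finset.mem_insert,
              Finset.mem_singleton]
            have hxB : x ∈ B → ¬x = ch := fun hx e => hchR B hB1 (e ▸ hx)
            tauto
          rw [Multiset.erase_cons_head, hT, erase2, hhead]
          exact key
      rcases Multiset.mem_cons.mp hA1 with rfl | hA2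
      · -- A = M₂ \ {d ch}
        rw [erase2] at hB
        obtain ⟨hc1, hc2⟩ := Finset.mem_sdiff.mp hch'
        rw [Finset.mem_singleton] at hc2
        have hM₁e : M₁ ∈ 𝓜.erase M₂ := by
          rw [hR, erase2]; exact Multiset.mem_cons_self _ _
        rcases Multiset.mem_cons.mp hB with rfl | hB1
        · -- B = M₁ \ {ch} : impossible
          exfalso
          obtain ⟨hc3, hc4⟩ := Finset.mem_sdiff.mp hdch'
          rw [Finset.mem_singleton] at hc4
          have hstep2 : DFStepVia d 𝓜 (((M₂ ∪ M₁) \ {ch', d ch'}) ::ₘ (𝓜.erase M₂).erase M₁) ch' :=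
            ⟨M₂, M₁, hM₂', hM₁e, hc1, hc3, rfl⟩
          have hred2 := hallM _ _ hstep2
          have hreg2 := reg2_step hinv hreg hstep2
          have e1 : ch ≠ ch' := fun e => hd2 (e ▸ hc1)
          have e2 : ch ≠ d ch' := Ne.symm hc4
          have f1 : d ch ≠ ch' := Ne.symm hc2
          have f2 : d ch ≠ d ch' := fun e => e1 (hinv.injective e)
          refine not_red_of_loop hinv (Multiset.card _) _ le_rfl hreg2
            ((M₂ ∪ M₁) \ {ch', d ch'}) ch (Multiset.mem_cons_self _ _) ?_ ?_ hred2
          · exact Finset.mem_sdiff.mpr ⟨Finset.mem_union_right _ hch, by simp [e1, e2]⟩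
          · exact Finset.mem_sdiff.mpr ⟨Finset.mem_union_left _ hdch, by simp [f1, f2]⟩
        · -- B ∈ R
          obtain ⟨T, hT⟩ : ∃ T, R = B ::ₘ T := ⟨_, (Multiset.cons_erase hB1).symm⟩
          have hBM : B ∈ 𝓜.erase M₂ := by
            rw [hR, erase2]; exact Multiset.mem_cons_of_mem hB1
          have hstep2 : DFStepVia d 𝓜 (((M₂ ∪ B) \ {ch', d ch'}) ::ₘ (𝓜.erase M₂).erase B) ch' :=
            ⟨M₂, B, hM₂', hBM, hc1, hdch', rfl⟩
          have heB : (𝓜.erase M₂).erase B = M₁ ::ₘ T := by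
            rw [hR, erase2, hT, erase2]
          have hred2 := hallM _ _ hstep2
          have hreg2 := reg2_step hinv hreg hstep2
          have hsum2 := step_sum hpd hstep2
          rw [heB] at hred2 hreg2 hsum2
          have g1 : d ch ≠ ch' := Ne.symm hc2
          have g2 : d ch ≠ d ch' := fun e => hdchR B hB1 (by rw [e]; exact hdch')
          have hdchN : d ch ∈ (M₂ ∪ B) \ {ch', d ch'} :=
            Finset.mem_sdiff.mpr ⟨Finset.mem_union_left _ hdch, by simp [g1, g2]⟩
          have key := ih _ (by omega) hreg2 hred2 M₁ ((M₂ ∪ B) \ {ch', d ch'}) ch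
            (Multiset.mem_cons_of_mem (Multiset.mem_cons_self _ _))
            (by rw [erase2]; exact Multiset.mem_cons_self _ _)
            hch hdchN
          rw [erase2, Multiset.erase_cons_head] at key
          have hhead : ((M₂ \ {d ch}) ∪ B) \ {ch', d ch'}
              = ((M₂ ∪ B) \ {ch', d ch'}) \ {d ch} := by
            ext x
            simp only [Finset.mem_sdiff, Finset.mem_union, Finset.mem_insert,
              Finset.mem_singleton]
            have hxB : x ∈ B → ¬x = d ch := fun hx e => hdchR B hB1 (e ▸ hx)
            tauto
          rw [erase2, hT, erase2, hhead, Multiset.cons_swap]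
          exact key
      · -- A ∈ R
        obtain ⟨T, hT⟩ : ∃ T, R = A ::ₘ T := ⟨_, (Multiset.cons_erase hA2).symm⟩
        have hAM : A ∈ 𝓜 := by
          rw [hR, hT]
          exact Multiset.mem_cons_of_mem (Multiset.mem_cons_of_mem (Multiset.mem_cons_self _ _))
        rw [hT, erase3] at hB
        have hchA : ch ∉ A := hchR A hA2
        have hdchA : d ch ∉ A := hdchR A hA2
        rcases Multiset.mem_cons.mp hB with rfl | hB1
        · -- B = M₁ \ {ch}
          obtain ⟨hc3, hc4⟩ := Finset.mem_sdiff.mp hdch'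
          rw [Finset.mem_singleton] at hc4
          have hM₁A : M₁ ∈ 𝓜.erase A := by
            rw [hR, hT, erase3]; exact Multiset.mem_cons_self _ _
          have hstep2 : DFStepVia d 𝓜 (((A ∪ M₁) \ {ch', d ch'}) ::ₘ (𝓜.erase A).erase M₁) ch' :=
            ⟨A, M₁, hAM, hM₁A, hch', hc3, rfl⟩
          have heB : (𝓜.erase A).erase M₁ = M₂ ::ₘ T := by
            rw [hR, hT, erase3, Multiset.erase_cons_head]
          have hred2 := hallM _ _ hstep2
          have hreg2 := reg2_step hinv hreg hstep2
          have hsum2 := step_sum hpd hstep2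
          rw [heB] at hred2 hreg2 hsum2
          have g1 : ch ≠ ch' := fun e => hchA (e ▸ hch')
          have g2 : ch ≠ d ch' := Ne.symm hc4
          have hchN : ch ∈ (A ∪ M₁) \ {ch', d ch'} :=
            Finset.mem_sdiff.mpr ⟨Finset.mem_union_right _ hch, by simp [g1, g2]⟩
          have key := ih _ (by omega) hreg2 hred2 ((A ∪ M₁) \ {ch', d ch'}) M₂ ch
            (Multiset.mem_cons_self _ _)
            (by rw [Multiset.erase_cons_head]; exact Multiset.mem_cons_self _ _)
            hchN hdch
          rw [Multiset.erase_cons_head, Multiset.erase_cons_head] at key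
          have hhead : (A ∪ (M₁ \ {ch})) \ {ch', d ch'} = ((A ∪ M₁) \ {ch', d ch'}) \ {ch} := by
            ext x
            simp only [Finset.mem_sdiff, Finset.mem_union, Finset.mem_insert,
              Finset.mem_singleton]
            have hxA : x ∈ A → ¬x = ch := fun hx e => hchA (e ▸ hx)
            tauto
          rw [hT, erase3, Multiset.erase_cons_head, hhead]
          exact key
        rcases Multiset.mem_cons.mp hB1 with rfl | hB2
        · -- B = M₂ \ {d ch}
          obtain ⟨hc3, hc4⟩ := Finset.mem_sdiff.mp hdch'
          rw [Finset.mem_singleton] at hc4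
          have hM₂A : M₂ ∈ 𝓜.erase A := by
            rw [hR, hT, erase3]
            exact Multiset.mem_cons_of_mem (Multiset.mem_cons_self _ _)
          have hstep2 : DFStepVia d 𝓜 (((A ∪ M₂) \ {ch', d ch'}) ::ₘ (𝓜.erase A).erase M₂) ch' :=
            ⟨A, M₂, hAM, hM₂A, hch', hc3, rfl⟩
          have heB : (𝓜.erase A).erase M₂ = M₁ ::ₘ T := by
            rw [hR, hT, erase3, erase2]
          have hred2 := hallM _ _ hstep2
          have hreg2 := reg2_step hinv hreg hstep2
          have hsum2 := step_sum hpd hstep2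
          rw [heB] at hred2 hreg2 hsum2
          have g1 : d ch ≠ ch' := fun e => hdchA (e ▸ hch')
          have g2 : d ch ≠ d ch' := Ne.symm hc4
          have hdchN : d ch ∈ (A ∪ M₂) \ {ch', d ch'} :=
            Finset.mem_sdiff.mpr ⟨Finset.mem_union_right _ hdch, by simp [g1, g2]⟩
          have key := ih _ (by omega) hreg2 hred2 M₁ ((A ∪ M₂) \ {ch', d ch'}) ch
            (Multiset.mem_cons_of_mem (Multiset.mem_cons_self _ _))
            (by rw [erase2]; exact Multiset.mem_cons_self _ _)
            hch hdchN
          rw [erase2, Multiset.erase_cons_head] at key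
          have hhead : (A ∪ (M₂ \ {d ch})) \ {ch', d ch'}
              = ((A ∪ M₂) \ {ch', d ch'}) \ {d ch} := by
            ext x
            simp only [Finset.mem_sdiff, Finset.mem_union, Finset.mem_insert,
              Finset.mem_singleton]
            have hxA : x ∈ A → ¬x = d ch := fun hx e => hdchA (e ▸ hx)
            tauto
          rw [hT, erase3, erase2, hhead, Multiset.cons_swap]
          exact key
        · -- B ∈ T
          obtain ⟨U, hU⟩ : ∃ U, T = B ::ₘ U := ⟨_, (Multiset.cons_erase hB2).symm⟩
          have hBA : B ∈ 𝓜.erase A := by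
            rw [hR, hT, erase3]
            exact Multiset.mem_cons_of_mem (Multiset.mem_cons_of_mem hB2)
          have hstep2 : DFStepVia d 𝓜 (((A ∪ B) \ {ch', d ch'}) ::ₘ (𝓜.erase A).erase B) ch' :=
            ⟨A, B, hAM, hBA, hch', hdch', rfl⟩
          have heB : (𝓜.erase A).erase B = M₁ ::ₘ M₂ ::ₘ U := by
            rw [hR, hT, erase3, hU, erase3]
          have hred2 := hallM _ _ hstep2
          have hreg2 := reg2_step hinv hreg hstep2
          have hsum2 := step_sum hpd hstep2
          rw [heB] at hred2 hreg2 hsum2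
          have key := ih _ (by omega) hreg2 hred2 M₁ M₂ ch
            (Multiset.mem_cons_of_mem (Multiset.mem_cons_self _ _))
            (by rw [erase2]; exact Multiset.mem_cons_of_mem (Multiset.mem_cons_self _ _))
            hch hdch
          rw [erase2, erase2] at key
          rw [hT, erase3, hU, erase3, Multiset.cons_swap ((A ∪ B) \ {ch', d ch'}) (M₁ \ {ch}),
            Multiset.cons_swap ((A ∪ B) \ {ch', d ch'}) (M₂ \ {d ch})]
          exact key

lemma pairwise_iff_pdisj {s : Multiset (Finset α)} :
    Multiset.Pairwise (fun M₁ M₂ : Finset α => Disjoint M₁ M₂) s ↔ Pdisj s := by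
  obtain ⟨l, rfl⟩ : ∃ l : List (Finset α), s = ↑l := ⟨s.toList, (Multiset.coe_toList s).symm⟩
  rw [Multiset.pairwise_coe_iff_pairwise]
  induction l with
  | nil => simp [Pdisj]
  | cons X t ih =>
    rw [List.pairwise_cons]
    constructor
    · rintro ⟨h1, h2⟩ a
      have ht := ih.mp h2 a
      rw [show ((X :: t : List (Finset α)) : Multiset (Finset α)) = X ::ₘ ↑t from rfl,
        Multiset.filter_cons, Multiset.card_add]
      by_cases hX : a ∈ X
      · have hz : Multiset.filter (fun M => a ∈ M) (↑t : Multiset (Finset α)) = 0 := by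
          rw [Multiset.filter_eq_nil]
          intro Y hY haY
          exact Finset.disjoint_left.mp (h1 Y (by exact_mod_cast hY)) hX haY
        simp [hX, hz]
      · simpa [hX] using ht
    · intro h
      have hcons : ∀ a : α, Multiset.card (Multiset.filter (fun M => a ∈ M)
          (X ::ₘ (↑t : Multiset (Finset α)))) ≤ 1 := h
      constructor
      · intro Y hY
        rw [Finset.disjoint_left]
        intro a haX haY
        have h' := hcons a
        rw [Multiset.filter_cons, Multiset.card_add, if_pos haX, Multiset.card_singleton] at h'
        have hYf : Y ∈ Multiset.filter (fun M => a ∈ M) (↑t : Multiset (Finset α)) := by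
          rw [Multiset.mem_filter]; exact ⟨by exact_mod_cast hY, haY⟩
        have : 1 ≤ Multiset.card (Multiset.filter (fun M => a ∈ M) (↑t : Multiset (Finset α))) :=
          Multiset.card_pos_iff_exists_mem.mpr ⟨Y, hYf⟩
        omega
      · apply ih.mpr
        intro a
        have h' := hcons a
        rw [Multiset.filter_cons, Multiset.card_add] at h'
        split_ifs at h' with hx
        · rw [Multiset.card_singleton] at h'; omega
        · rw [Multiset.card_zero] at h'; omega

end DFAux

/-- If a regular DF-reducible collection `𝓜` has two distinct member
occurrences `M₁`, `M₂` with `ch ∈ M₁` and `d ch ∈ M₂`, then the collection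
obtained by removing `M₁` and `M₂` and adding the two sets `M₁ \ {ch}` and
`M₂ \ {d ch}` is also DF-reducible. -/
theorem DFReducible.erase_pair {α : Type*} [DecidableEq α] (d : α → α)
    (hinv : Function.Involutive d) (hfpf : ∀ ch : α, d ch ≠ ch)
    (𝓜 : Multiset (Finset α)) (hne : 𝓜 ≠ 0)
    (hreg : Regular d 𝓜) (hred : DFReducible d 𝓜)
    (M₁ M₂ : Finset α) (ch : α)
    (hM₁ : M₁ ∈ 𝓜) (hM₂ : M₂ ∈ 𝓜.erase M₁)
    (hch : ch ∈ M₁) (hdch : d ch ∈ M₂) :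
    DFReducible d
      ((M₁ \ {ch}) ::ₘ (M₂ \ {d ch}) ::ₘ ((𝓜.erase M₁).erase M₂)) := by
  have hreg2 : DFAux.Reg2 d 𝓜 := ⟨DFAux.pairwise_iff_pdisj.mp hreg.1, hreg.2⟩
  exact DFAux.main_aux hinv _ 𝓜 le_rfl hreg2 hred M₁ M₂ ch hM₁ hM₂ hch hdch
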